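/- Alternating path characterization: let G be a graph with a perfect matching M and let D be the dual of the matching delta-matroid of G (so F ⊆ V is feasible in D iff G − F has a perfect matching). Then F is feasible in D if and only if there is a collection of |F|/2 pairwise vertex-disjoint M-alternating paths whose endpoints are exactly the vertices of F and whose internal vertices avoid F. -/

import Mathlib

open SimpleGraph
namespace AltPathAux



variable {V : Type*}

/-- Build a walk following a vertex sequence `a 0, a 1, ..., a k`. -/
def walkTo (G : SimpleGraph V) (a : ℕ → V) :
    (k : ℕ) → (∀ s, s < k → G.Adj (a s) (a (s+1))) → G.Walk (a 0) (a k)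
  | 0, _ => Walk.nil
  | (k+1), h => (walkTo G a k (fun s hs => h s (Nat.lt_succ_of_lt hs))).concat
      (h k (Nat.lt_succ_self k))

lemma walkTo_support (G : SimpleGraph V) (a : ℕ → V) :
    ∀ (k : ℕ) (h : ∀ s, s < k → G.Adj (a s) (a (s+1))),
      (walkTo G a k h).support = (List.range (k+1)).map a
  | 0, _ => rfl
  | (k+1), h => by
      rw [walkTo, Walk.support_concat, walkTo_support G a k]
      simp [List.range_succ]

lemma walkTo_edges (G : SimpleGraph V) (a : ℕ → V) :
    ∀ (k : ℕ) (h : ∀ s, s < k → G.Adj (a s) (a (s+1))),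
      (walkTo G a k h).edges = (List.range k).map (fun s => s(a s, a (s+1)))
  | 0, _ => rfl
  | (k+1), h => by
      rw [walkTo, Walk.edges_concat, walkTo_edges G a k]
      simp [List.range_succ]

lemma walkTo_length (G : SimpleGraph V) (a : ℕ → V) (k : ℕ)
    (h : ∀ s, s < k → G.Adj (a s) (a (s+1))) : (walkTo G a k h).length = k := by
  have := walkTo_edges G a k h
  have h2 := (walkTo G a k h).length_edges
  rw [this] at h2
  simpa using h2.symm

lemma get_map_range {k : ℕ} (a : ℕ → V) (j : ℕ) (h : j < ((List.range k).map a).length) :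
    ((List.range k).map a).get ⟨j, h⟩ = a j := by
  simp

/-- The `j`-th edge of a walk joins the `j`-th and `(j+1)`-st support vertices. -/
lemma edges_get_eq {x y : V} {G : SimpleGraph V} (p : G.Walk x y) :
    ∀ (j : ℕ) (h : j < p.edges.length),
      p.edges.get ⟨j, h⟩ =
        s(p.support.get ⟨j, by rw [Walk.length_support]; rw [Walk.length_edges] at h; omega⟩,
          p.support.get ⟨j+1, by rw [Walk.length_support]; rw [Walk.length_edges] at h; omega⟩) := by
  induction p with
  | nil => intro j h; simp at h
  | @cons u v w hadj q ih =>
      intro j h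
      match j with
      | 0 =>
        simp only [Walk.edges_cons, Walk.support_cons, List.get]
        have : q.support.get ⟨0, by rw [Walk.length_support]; omega⟩ = v := by
          cases q <;> rfl
        rw [this]
      | (j+1) =>
        simp only [Walk.edges_cons, Walk.support_cons, List.get]
        exact ih j (by simpa using h)

variable {V : Type*}

/-- The alternating sequence starting at `f`: matching edge, then `m`-edge, etc. -/
def seq (μ m : V → V) (f : V) : ℕ → V
  | 0 => f
  | (n+1) => if Even n then μ (seq μ m f n) else m (seq μ m f n)

lemma seq_succ_even {μ m : V → V} {f : V} {n : ℕ} (h : Even n) :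
    seq μ m f (n+1) = μ (seq μ m f n) := by simp [seq, h]

lemma seq_succ_odd {μ m : V → V} {f : V} {n : ℕ} (h : ¬ Even n) :
    seq μ m f (n+1) = m (seq μ m f n) := by simp [seq, h]

/-- Master injectivity lemma along the alternating sequence. -/
lemma seq_inj {G : SimpleGraph V} {μ m : V → V} {F : Finset V} {f : V}
    (hμadj : ∀ v, G.Adj v (μ v)) (hμinv : ∀ v, μ (μ v) = v)
    (hm : ∀ v, v ∉ F → m v ∉ F ∧ G.Adj v (m v) ∧ m (m v) = v)
    (hf : f ∈ F)
    (N : ℕ) (hNodd : Odd N) (hN : ∀ t, 0 < t → t < N → seq μ m f t ∉ F) :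
    ∀ j, j ≤ N → ∀ i, i < j → seq μ m f i ≠ seq μ m f j := by
  set a := seq μ m f with ha
  have R1 : ∀ t, Even t → a (t+1) = μ (a t) := fun t ht => seq_succ_even ht
  have R2 : ∀ t, ¬ Even t → a (t+1) = m (a t) := fun t ht => seq_succ_odd ht
  have R3 : ∀ s, Even s → μ (a (s+1)) = a s := fun s hs => by rw [R1 s hs, hμinv]
  have R4 : ∀ s, ¬ Even s → a s ∉ F → m (a (s+1)) = a s := fun s hs hsF => by
    rw [R2 s hs, (hm _ hsF).2.2]
  have hair : ∀ v, v ≠ μ v := fun v hv => G.irrefl (by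
    have := hμadj v; rwa [← hv] at this)
  have hmir : ∀ v, v ∉ F → v ≠ m v := fun v hv h2 => G.irrefl (by
    have := (hm v hv).2.1; rwa [← h2] at this)
  intro j
  induction j using Nat.strong_induction_on with
  | _ j IH =>
  intro hjN i hij heq
  have hNodd' : ¬ Even N := Nat.not_even_iff_odd.mpr hNodd
  rcases Nat.eq_zero_or_pos i with rfl | hi0
  · -- i = 0
    rcases lt_or_eq_of_le hjN with hjN' | rfl
    · exact hN j hij hjN' (heq ▸ hf)
    · -- j = N odd
      obtain ⟨j', rfl⟩ : ∃ j', j = j' + 1 := ⟨j - 1, by omega⟩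
      have hj' : Even j' := by
        rcases Nat.even_or_odd j' with h | h
        · exact h
        · exact absurd (by simpa [Nat.even_add_one, Nat.not_even_iff_odd] using h) hNodd'
      have h1 : a 1 = μ (a 0) := R1 0 (by norm_num)
      have h2 : μ (a (j'+1)) = a j' := R3 j' hj'
      rcases Nat.eq_zero_or_pos j' with rfl | hj'0
      · exact hair (a 0) (heq.trans h1)
      · have h3 : a 1 = a j' := by rw [h1, heq, h2]
        rcases eq_or_lt_of_le (show 1 ≤ j' from hj'0) with h4 | h4
        · -- j' = 1 : but j' even, 1 odd
          simp [← h4] at hj'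
        · exact IH j' (by omega) (by omega) 1 h4 h3
  · -- 0 < i
    obtain ⟨i', rfl⟩ : ∃ i', i = i' + 1 := ⟨i - 1, by omega⟩
    have hiN : i' + 1 < N := by omega
    have haiF : a (i'+1) ∉ F := hN _ (by omega) hiN
    obtain ⟨j', rfl⟩ : ∃ j', j = j' + 1 := ⟨j - 1, by omega⟩
    rcases Nat.even_or_odd (i'+1) with hie | hio
    · -- i even (so i' odd, i ≥ 2)
      have hi'o : ¬ Even i' := Nat.even_add_one.mp hie
      have hi'pos : 0 < i' := Nat.pos_of_ne_zero (fun h => hi'o (h ▸ Even.zero))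
      rcases Nat.even_or_odd (j'+1) with hje | hjo
      · -- both even
        have hj'o : ¬ Even j' := Nat.even_add_one.mp hje
        have hj'pos : 0 < j' := Nat.pos_of_ne_zero (fun h => hj'o (h ▸ Even.zero))
        have hjN' : j' + 1 < N := by
          rcases eq_or_lt_of_le hjN with h | h
          · exact absurd (h ▸ hje) hNodd'
          · exact h
        have hiF : a i' ∉ F := hN _ (by omega) (by omega)
        have hjF : a j' ∉ F := hN _ (by omega) (by omega)
        have : a i' = a j' := by
          rw [← R4 i' hi'o hiF, ← R4 j' hj'o hjF, heq]
        exact IH j' (by omega) (by omega) i' (by omega) this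
      · -- i even, j odd
        have hj'e : Even j' := Nat.not_odd_iff_even.mp (Nat.odd_add_one.mp hjo)
        rcases eq_or_lt_of_le (Nat.succ_le_of_lt hij) with h | h
        · -- j = i + 1
          have h5 : a (j'+1) = μ (a (i'+1)) := by rw [← h]; exact R1 _ hie
          exact hair _ (heq.trans h5)
        · have h5 : a (i'+1+1) = a j' := by
            rw [R1 _ hie, ← R3 j' hj'e, heq]
          have h6 : i' + 1 + 1 ≠ j' := by
            intro hE
            -- then j = i + 2, parities of i,j equal; but i even, j odd
            rw [← hE] at hj'e
            rw [Nat.even_add_one, Nat.even_add_one, not_not] at hj'e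
            exact hi'o hj'e
          have h7 : i' + 1 + 1 < j' := by omega
          exact IH j' (by omega) (by omega) (i'+1+1) h7 h5
    · -- i odd
      have hi'e : Even i' := Nat.not_odd_iff_even.mp (Nat.odd_add_one.mp hio)
      have hio' : ¬ Even (i'+1) := Nat.not_even_iff_odd.mpr hio
      rcases Nat.even_or_odd (j'+1) with hje | hjo
      · -- i odd, j even; j < N
        have hj'o : ¬ Even j' := Nat.even_add_one.mp hje
        have hj'pos : 0 < j' := Nat.pos_of_ne_zero (fun h => hj'o (h ▸ Even.zero))
        have hjN' : j' + 1 < N := by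
          rcases eq_or_lt_of_le hjN with h | h
          · exact absurd (h ▸ hje) hNodd'
          · exact h
        rcases eq_or_lt_of_le (Nat.succ_le_of_lt hij) with h | h
        · -- j = i+1 : a j = m (a i), heq gives fixed point
          have : a (j'+1) = m (a (i'+1)) := by rw [← h]; exact R2 _ hio'
          exact hmir _ haiF (heq.trans this)
        · have hjF : a j' ∉ F := hN _ (by omega) (by omega)
          have h5 : a (i'+1+1) = a j' := by
            rw [R2 _ hio', ← R4 j' hj'o hjF, heq]
          have h6 : i' + 1 + 1 ≠ j' := by
            intro hE
            rw [← hE] at hj'o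
            rw [Nat.even_add_one, Nat.even_add_one, not_not] at hj'o
            exact hj'o hi'e
          exact IH j' (by omega) (by omega) (i'+1+1) (by omega) h5
      · -- both odd
        have hj'e : Even j' := Nat.not_odd_iff_even.mp (Nat.odd_add_one.mp hjo)
        have : a i' = a j' := by rw [← R3 i' hi'e, ← R3 j' hj'e, heq]
        exact IH j' (by omega) (by omega) i' (by omega) this


lemma exists_stop [Finite V] {G : SimpleGraph V} {μ m : V → V} {F : Finset V} {f : V}
    (hμadj : ∀ v, G.Adj v (μ v)) (hμinv : ∀ v, μ (μ v) = v)
    (hm : ∀ v, v ∉ F → m v ∉ F ∧ G.Adj v (m v) ∧ m (m v) = v)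
    (hf : f ∈ F) : ∃ n, Odd n ∧ seq μ m f n ∈ F := by
  by_contra hcon
  push_neg at hcon
  set a := seq μ m f with ha
  have hall : ∀ t, 0 < t → a t ∉ F := by
    intro t ht
    rcases Nat.even_or_odd t with he | ho
    · obtain ⟨s, rfl⟩ : ∃ s, t = s + 1 := ⟨t - 1, by omega⟩
      have hso : Odd s := Nat.not_even_iff_odd.mp (Nat.even_add_one.mp he)
      have : a (s+1) = m (a s) := seq_succ_odd (Nat.not_even_iff_odd.mpr hso)
      rw [this]
      exact (hm _ (hcon s hso)).1
    · exact hcon t ho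
  have hinj : Function.Injective a := by
    intro i j hij
    by_contra hne
    rcases Nat.lt_or_ge i j with h | h
    · exact seq_inj hμadj hμinv hm hf (2*j+1) ⟨j, by ring⟩
        (fun t ht _ => hall t ht) j (by omega) i h hij
    · have h' : j < i := by omega
      exact seq_inj hμadj hμinv hm hf (2*i+1) ⟨i, by ring⟩
        (fun t ht _ => hall t ht) i (by omega) j h' hij.symm
  exact (Finite.exists_ne_map_eq_of_infinite a).elim (fun x hx =>
    hx.elim (fun y hy => hy.1 (hinj hy.2)))



lemma exists_path [Finite V] [DecidableEq V] {G : SimpleGraph V} {μ m : V → V} {F : Finset V}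
    {f : V}
    (hμadj : ∀ v, G.Adj v (μ v)) (hμinv : ∀ v, μ (μ v) = v)
    (hm : ∀ v, v ∉ F → m v ∉ F ∧ G.Adj v (m v) ∧ m (m v) = v)
    (hf : f ∈ F) :
    ∃ N : ℕ, Odd N ∧ seq μ m f N ∈ F ∧
      (∀ t, 0 < t → t < N → seq μ m f t ∉ F) ∧
      (∀ s, s < N → G.Adj (seq μ m f s) (seq μ m f (s+1))) ∧
      (∀ i j, i < j → j ≤ N → seq μ m f i ≠ seq μ m f j) := by
  classical
  set a := seq μ m f with ha
  have hex : ∃ n, Odd n ∧ a n ∈ F := exists_stop hμadj hμinv hm hf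
  set N := Nat.find hex with hN
  have hspec := Nat.find_spec hex
  have hint : ∀ t, 0 < t → t < N → a t ∉ F := by
    intro t ht htN
    rcases Nat.even_or_odd t with he | ho
    · obtain ⟨s, rfl⟩ : ∃ s, t = s + 1 := ⟨t - 1, by omega⟩
      have hso : Odd s := Nat.not_even_iff_odd.mp (Nat.even_add_one.mp he)
      have hsF : a s ∉ F := by
        rcases Nat.eq_zero_or_pos s with rfl | hs
        · exact absurd hso (by simp)
        · intro hc
          exact Nat.find_min hex (m := s) (by omega) ⟨hso, hc⟩
      rw [show a (s+1) = m (a s) from seq_succ_odd (Nat.not_even_iff_odd.mpr hso)]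
      exact (hm _ hsF).1
    · intro hc
      exact Nat.find_min hex (m := t) htN ⟨ho, hc⟩
  refine ⟨N, hspec.1, hspec.2, hint, ?_, ?_⟩
  · -- adjacency
    intro s hs
    rcases Nat.even_or_odd s with he | ho
    · rw [show a (s+1) = μ (a s) from seq_succ_even he]
      exact hμadj _
    · have hsF : a s ∉ F := by
        rcases Nat.eq_zero_or_pos s with rfl | hs0
        · exact absurd ho (by simp)
        · exact hint s hs0 hs
      rw [show a (s+1) = m (a s) from seq_succ_odd (Nat.not_even_iff_odd.mpr ho)]
      exact (hm _ hsF).2.1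
  · intro i j hij hjN
    exact seq_inj hμadj hμinv hm hf N hspec.1 hint j hjN i hij

variable {V : Type*}


theorem aux [Fintype V] [DecidableEq V] (G : SimpleGraph V) (M : G.Subgraph)
    (μ : V → V)
    (hμ : ∀ v w, M.Adj v w ↔ w = μ v)
    (hμadj : ∀ v, G.Adj v (μ v)) (hμinv : ∀ v, μ (μ v) = v) :
    ∀ (n : ℕ) (F : Finset V), F.card = n → ∀ (m : V → V),
      (∀ v, v ∉ F → m v ∉ F ∧ G.Adj v (m v) ∧ m (m v) = v) →
      ∃ (k : ℕ) (u v : Fin k → V) (p : ∀ i, G.Walk (u i) (v i)),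
        F.card = 2 * k ∧
        (∀ i, (p i).IsPath) ∧
        (∀ i, Odd (p i).length) ∧
        (∀ i, ∀ j : ℕ, ∀ h : j < (p i).edges.length,
          ((p i).edges.get ⟨j, h⟩ ∈ M.edgeSet ↔ Even j)) ∧
        (∀ i, u i ∈ F ∧ v i ∈ F) ∧
        (∀ i, ∀ w ∈ (p i).support, w = u i ∨ w = v i ∨ w ∉ F) ∧
        (∀ i j, i ≠ j → Disjoint (p i).support.toFinset (p j).support.toFinset) ∧
        Finset.univ.biUnion (fun i => ({u i, v i} : Finset V)) = F ∧
        (∀ i, ∀ w ∈ (p i).support, w ∈ F ∨ μ w ≠ m w) ∧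
        (∀ i, ∀ j : ℕ, ∀ h : j < (p i).edges.length, ¬ Even j →
          ∃ b, b ∉ F ∧ (p i).edges.get ⟨j, h⟩ = s(b, m b)) := by
  intro n
  induction n using Nat.strong_induction_on with
  | _ n IH =>
  intro F hFn m hm
  rcases Nat.eq_zero_or_pos n with rfl | npos
  · -- base case : F = ∅
    have hF : F = ∅ := Finset.card_eq_zero.mp hFn
    subst hF
    exact ⟨0, Fin.elim0, Fin.elim0, fun i => i.elim0, by simp, fun i => i.elim0,
      fun i => i.elim0, fun i => i.elim0, fun i => i.elim0, fun i => i.elim0,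
      fun i => i.elim0, by simp, fun i => i.elim0, fun i => i.elim0⟩
  · -- inductive step
    have hFne : F.Nonempty := Finset.card_pos.mp (hFn ▸ npos)
    obtain ⟨f, hf⟩ := hFne
    obtain ⟨N, hNodd, hgF, hint, hadj, hinj⟩ :=
      exists_path (G := G) (μ := μ) (m := m) (F := F) (f := f) hμadj hμinv hm hf
    set a := seq μ m f with ha
    have ha0 : a 0 = f := rfl
    set g := a N with hg
    have hNpos : 0 < N := hNodd.pos
    have hNe : ¬ Even N := Nat.not_even_iff_odd.mpr hNodd
    have R1 : ∀ t, Even t → a (t+1) = μ (a t) := fun t ht => seq_succ_even ht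
    have R2 : ∀ t, ¬ Even t → a (t+1) = m (a t) := fun t ht => seq_succ_odd ht
    have R3 : ∀ s, Even s → μ (a (s+1)) = a s := fun s hs => by rw [R1 s hs, hμinv]
    have R4 : ∀ s, ¬ Even s → a s ∉ F → m (a (s+1)) = a s := fun s hs hsF => by
      rw [R2 s hs, (hm _ hsF).2.2]
    set P : G.Walk f g := walkTo G a N hadj with hP
    have hsupp : P.support = (List.range (N+1)).map a := walkTo_support G a N hadj
    have hedges : P.edges = (List.range N).map (fun s => s(a s, a (s+1))) :=
      walkTo_edges G a N hadj
    have hlen : P.length = N := walkTo_length G a N hadj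
    have hmemS : ∀ w, w ∈ P.support ↔ ∃ t, t ≤ N ∧ a t = w := by
      intro w
      rw [hsupp]
      simp [Nat.lt_succ_iff]
    set S : Finset V := (Finset.range (N+1)).image a with hS
    have hSmem : ∀ x, x ∈ S ↔ ∃ t, t ≤ N ∧ a t = x := by
      intro x
      simp [hS, Nat.lt_succ_iff]
    have hfS : f ∈ S := (hSmem f).mpr ⟨0, by omega, rfl⟩
    have hgS : g ∈ S := (hSmem g).mpr ⟨N, le_refl _, rfl⟩
    have hfg : f ≠ g := hinj 0 N hNpos (le_refl _)
    set F' : Finset V := (F.erase f).erase g with hF'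
    have hgef : g ∈ F.erase f := Finset.mem_erase.mpr ⟨hfg.symm, hgF⟩
    have hcard' : F'.card + 2 = F.card := by
      rw [hF', Finset.card_erase_of_mem hgef, Finset.card_erase_of_mem hf]
      have h2 : 1 < F.card := Finset.one_lt_card.mpr ⟨f, hf, g, hgF, hfg⟩
      omega
    have hF'sub : F' ⊆ F := fun x hx =>
      Finset.mem_of_mem_erase (Finset.mem_of_mem_erase hx)
    have hfg_mem : ∀ x, x ∉ F' → x ∈ F → x = f ∨ x = g := by
      intro x hx hxF
      by_contra hc
      push_neg at hc
      exact hx (Finset.mem_erase.mpr ⟨hc.2, Finset.mem_erase.mpr ⟨hc.1, hxF⟩⟩)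
    have hfF' : f ∉ F' := fun h =>
      (Finset.mem_erase.mp (Finset.mem_of_mem_erase h)).1 rfl
    have hgF' : g ∉ F' := fun h => (Finset.mem_erase.mp h).1 rfl
    have hBS : ∀ x, x ∈ S → x ∉ F' := by
      intro x hx
      obtain ⟨t, htN, rfl⟩ := (hSmem x).mp hx
      rcases Nat.eq_zero_or_pos t with rfl | ht0
      · exact ha0 ▸ hfF'
      · rcases eq_or_lt_of_le htN with rfl | htN'
        · exact hgF'
        · exact fun hc => hint t ht0 htN' (hF'sub hc)
    have hAS : ∀ t, t ≤ N → μ (a t) ∈ S := by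
      intro t htN
      rcases Nat.even_or_odd t with he | ho
      · have htN' : t < N := by
          rcases eq_or_lt_of_le htN with rfl | h
          · exact absurd he hNe
          · exact h
        exact (hSmem _).mpr ⟨t+1, Nat.succ_le_of_lt htN', R1 t he⟩
      · obtain ⟨c, rfl⟩ := ho
        have hse : Even (2*c) := even_two_mul c
        exact (hSmem _).mpr ⟨2*c, by omega, (R3 _ hse).symm⟩
    have hDS : ∀ x, x ∉ F → x ∉ S → m x ∉ S := by
      intro x hxF hxS hc
      obtain ⟨t, htN, hteq⟩ := (hSmem _).mp hc
      rcases Nat.eq_zero_or_pos t with rfl | ht0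
      · exact (hm x hxF).1 (by rw [← hteq, ha0]; exact hf)
      · rcases eq_or_lt_of_le htN with rfl | htN'
        · exact (hm x hxF).1 (hteq ▸ hgF)
        · -- interior
          rcases Nat.even_or_odd t with he | ho
          · obtain ⟨s, rfl⟩ : ∃ s, t = s + 1 := ⟨t - 1, by omega⟩
            have hso : ¬ Even s := Nat.even_add_one.mp he
            have hs0 : 0 < s := Nat.pos_of_ne_zero (fun h => hso (h ▸ Even.zero))
            have hsF : a s ∉ F := hint s hs0 (by omega)
            have : m (a (s+1)) = a s := R4 s hso hsF
            have hx : x = a s := by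
              rw [← (hm x hxF).2.2, ← hteq]; exact this
            exact hxS ((hSmem x).mpr ⟨s, by omega, hx.symm⟩)
          · have hto : ¬ Even t := Nat.not_even_iff_odd.mpr ho
            have : a (t+1) = m (a t) := R2 t hto
            have hx : x = a (t+1) := by
              rw [← (hm x hxF).2.2, this, ← hteq]
            exact hxS ((hSmem x).mpr ⟨t+1, by omega, hx.symm⟩)
    set m'' : V → V := fun x => if x ∈ S then μ x else m x with hm''def
    have hm''S : ∀ x, x ∈ S → m'' x = μ x := by
      intro x hx; simp [hm''def, hx]
    have hm''nS : ∀ x, x ∉ S → m'' x = m x := by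
      intro x hx; simp [hm''def, hx]
    have hnFnS : ∀ x, x ∉ F' → x ∉ S → x ∉ F := by
      intro x hx hxS hxF
      rcases hfg_mem x hx hxF with rfl | rfl
      · exact hxS hfS
      · exact hxS hgS
    have hm'' : ∀ x, x ∉ F' → m'' x ∉ F' ∧ G.Adj x (m'' x) ∧ m'' (m'' x) = x := by
      intro x hx
      by_cases hxS : x ∈ S
      · rw [hm''S x hxS]
        obtain ⟨t, htN, rfl⟩ := (hSmem x).mp hxS
        have hmu : μ (a t) ∈ S := hAS t htN
        exact ⟨hBS _ hmu, hμadj _, by rw [hm''S _ hmu, hμinv]⟩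
      · rw [hm''nS x hxS]
        have hxF : x ∉ F := hnFnS x hx hxS
        have hmS : m x ∉ S := hDS x hxF hxS
        exact ⟨fun hc => (hm x hxF).1 (hF'sub hc), (hm x hxF).2.1,
          by rw [hm''nS _ hmS, (hm x hxF).2.2]⟩
    obtain ⟨k, uu, vv, pp, C1, C2, C3, C4, C5, C6, C7, C8, S1, S2⟩ :=
      IH F'.card (by omega) F' rfl m'' hm''
    have hQnotS : ∀ i, ∀ w ∈ (pp i).support, w ∉ S := by
      intro i w hw hwS
      rcases S1 i w hw with h | h
      · exact hBS w hwS h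
      · exact h (hm''S w hwS).symm
    have hgetP : ∀ (j : ℕ) (h : j < P.edges.length),
        P.edges.get ⟨j, h⟩ = s(a j, a (j+1)) := by
      intro j h
      rw [List.get_of_eq hedges]
      exact get_map_range _ j _
    have hlenE : P.edges.length = N := by rw [Walk.length_edges, hlen]
    have hPnodup : P.support.Nodup := by
      rw [hsupp]
      refine List.Nodup.map_on ?_ List.nodup_range
      intro x hx y hy hxy
      rw [List.mem_range, Nat.lt_succ_iff] at hx hy
      by_contra hne
      rcases Nat.lt_or_ge x y with h | h
      · exact hinj x y h hy hxy
      · exact hinj y x (by omega) hx hxy.symm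
    have hPQdisj : ∀ i, Disjoint P.support.toFinset (pp i).support.toFinset := by
      intro i
      rw [Finset.disjoint_left]
      intro x hx hx2
      rw [List.mem_toFinset] at hx hx2
      obtain ⟨t, ht, he⟩ := (hmemS x).mp hx
      exact hQnotS i x hx2 ((hSmem x).mpr ⟨t, ht, he⟩)
    -- assemble
    refine ⟨k+1, Fin.cases f uu, Fin.cases g vv,
      Fin.cases P pp, ?_, ?_, ?_, ?_, ?_, ?_, ?_, ?_, ?_, ?_⟩
    · omega
    · -- paths
      intro i
      rcases Fin.eq_zero_or_eq_succ i with rfl | ⟨i', rfl⟩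
      · exact (Walk.isPath_def P).mpr hPnodup
      · exact C2 i'
    · -- odd lengths
      intro i
      rcases Fin.eq_zero_or_eq_succ i with rfl | ⟨i', rfl⟩
      · exact hlen ▸ hNodd
      · exact C3 i'
    · -- M-edge alternation
      intro i
      rcases Fin.eq_zero_or_eq_succ i with rfl | ⟨i', rfl⟩
      · intro j h
        simp only [Fin.cases_zero] at h ⊢
        have hjN : j < N := hlenE ▸ h
        change P.edges.get ⟨j, h⟩ ∈ M.edgeSet ↔ Even j
        rw [hgetP j h]
        constructor
        · intro hmem
          by_contra hodd
          have hadj' : M.Adj (a j) (a (j+1)) := (Subgraph.mem_edgeSet).mp hmem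
          have he1 : a (j+1) = μ (a j) := (hμ _ _).mp hadj'
          obtain ⟨c, rfl⟩ := Nat.not_even_iff_odd.mp hodd
          have he2 : μ (a (2*c+1)) = a (2*c) := R3 _ (even_two_mul c)
          exact hinj (2*c) (2*c+1+1) (by omega) (by omega) (by rw [← he2, ← he1])
        · intro he
          rw [R1 j he]
          exact (Subgraph.mem_edgeSet).mpr ((hμ _ _).mpr rfl)
      · exact C4 i'
    · -- endpoints in F
      intro i
      rcases Fin.eq_zero_or_eq_succ i with rfl | ⟨i', rfl⟩
      · exact ⟨hf, hgF⟩
      · exact ⟨hF'sub (C5 i').1, hF'sub (C5 i').2⟩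
    · -- internal vertices avoid F
      intro i
      rcases Fin.eq_zero_or_eq_succ i with rfl | ⟨i', rfl⟩
      · intro w hw
        obtain ⟨t, htN, rfl⟩ := (hmemS w).mp hw
        rcases Nat.eq_zero_or_pos t with rfl | ht0
        · exact Or.inl rfl
        · rcases eq_or_lt_of_le htN with rfl | htN'
          · exact Or.inr (Or.inl rfl)
          · exact Or.inr (Or.inr (hint t ht0 htN'))
      · intro w hw
        rcases C6 i' w hw with h | h | h
        · exact Or.inl h
        · exact Or.inr (Or.inl h)
        · refine Or.inr (Or.inr ?_)
          intro hwF
          have hwS : w ∉ S := hQnotS i' w hw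
          rcases hfg_mem w h hwF with rfl | rfl
          · exact hwS hfS
          · exact hwS hgS
    · -- pairwise disjoint
      intro i j hij
      rcases Fin.eq_zero_or_eq_succ i with rfl | ⟨i', rfl⟩ <;>
        rcases Fin.eq_zero_or_eq_succ j with rfl | ⟨j', rfl⟩
      · exact absurd rfl hij
      · exact hPQdisj j'
      · exact (hPQdisj i').symm
      · exact C7 i' j' (fun h => hij (by rw [h]))
    · -- endpoints exactly F
      ext x
      simp only [Finset.mem_biUnion, Finset.mem_univ, true_and, Finset.mem_insert,
        Finset.mem_singleton]
      constructor
      · rintro ⟨i, hi⟩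
        rcases Fin.eq_zero_or_eq_succ i with rfl | ⟨i', rfl⟩
        · simp only [Fin.cases_zero] at hi
          rcases hi with rfl | rfl
          · exact hf
          · exact hgF
        · simp only [Fin.cases_succ] at hi
          refine hF'sub ?_
          rw [← C8]
          exact Finset.mem_biUnion.mpr ⟨i', Finset.mem_univ _, by
            simp only [Finset.mem_insert, Finset.mem_singleton]; exact hi⟩
      · intro hxF
        by_cases hxF' : x ∈ F'
        · rw [← C8] at hxF'
          obtain ⟨i, -, hi⟩ := Finset.mem_biUnion.mp hxF'
          simp only [Finset.mem_insert, Finset.mem_singleton] at hi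
          exact ⟨i.succ, by simpa using hi⟩
        · rcases hfg_mem x hxF' hxF with rfl | rfl
          · exact ⟨0, by simp⟩
          · exact ⟨0, by simp⟩
    · -- strengthened : support in F or μ ≠ m
      intro i
      rcases Fin.eq_zero_or_eq_succ i with rfl | ⟨i', rfl⟩
      · intro w hw
        obtain ⟨t, htN, rfl⟩ := (hmemS w).mp hw
        rcases Nat.eq_zero_or_pos t with rfl | ht0
        · exact Or.inl (ha0 ▸ hf)
        · rcases eq_or_lt_of_le htN with rfl | htN'
          · exact Or.inl hgF
          · refine Or.inr ?_
            rcases Nat.even_or_odd t with he | ho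
            · obtain ⟨s, rfl⟩ : ∃ s, t = s + 1 := ⟨t - 1, by omega⟩
              have hso : ¬ Even s := Nat.even_add_one.mp he
              have hs0 : 0 < s := Nat.pos_of_ne_zero (fun h => hso (h ▸ Even.zero))
              have hsF : a s ∉ F := hint s hs0 (by omega)
              rw [← R1 _ he, R4 s hso hsF]
              intro hc
              exact hinj s (s+1+1) (by omega) (by omega) hc.symm
            · have hto : ¬ Even t := Nat.not_even_iff_odd.mpr ho
              obtain ⟨c, rfl⟩ := ho
              rw [R3 _ (even_two_mul c), ← R2 _ hto]
              intro hc
              exact hinj (2*c) (2*c+1+1) (by omega) (by omega) hc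
      · intro w hw
        rcases S1 i' w hw with h | h
        · exact Or.inl (hF'sub h)
        · refine Or.inr ?_
          rwa [hm''nS w (hQnotS i' w hw)] at h
    · -- strengthened : odd edges are m-edges
      intro i
      rcases Fin.eq_zero_or_eq_succ i with rfl | ⟨i', rfl⟩
      · intro j h hodd
        simp only [Fin.cases_zero] at h ⊢
        have hjN : j < N := hlenE ▸ h
        obtain ⟨c, hc⟩ := Nat.not_even_iff_odd.mp hodd
        refine ⟨a j, hint j (by omega) hjN, ?_⟩
        change P.edges.get ⟨j, h⟩ = s(a j, m (a j))
        rw [hgetP j h, R2 j hodd]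
      · intro j h hodd
        obtain ⟨b, hbF', heq⟩ := S2 i' j h hodd
        have hmem : (pp i').edges.get ⟨j, h⟩ ∈ (pp i').edges := List.get_mem _ _
        rw [heq] at hmem
        have hb : b ∈ (pp i').support := Walk.fst_mem_support_of_mem_edges _ hmem
        have hbS : b ∉ S := hQnotS i' b hb
        rw [hm''nS b hbS] at heq
        exact ⟨b, hnFnS b hbF' hbS, heq⟩


lemma support_get_zero {G : SimpleGraph V} {x y : V} (p : G.Walk x y)
    (h : 0 < p.support.length) : p.support.get ⟨0, h⟩ = x := by cases p <;> rfl

lemma support_get_last {G : SimpleGraph V} {x y : V} (p : G.Walk x y)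
    (h : p.length < p.support.length) : p.support.get ⟨p.length, h⟩ = y := by
  induction p with
  | nil => rfl
  | cons hadj q ih => exact ih _

theorem backward [DecidableEq V] (G : SimpleGraph V) (M : G.Subgraph)
    (μ : V → V) (hμ : ∀ v w, M.Adj v w ↔ w = μ v) (hμinv : ∀ v, μ (μ v) = v)
    (F : Finset V) (k : ℕ) (u v : Fin k → V) (p : ∀ i, G.Walk (u i) (v i))
    (C2 : ∀ i, (p i).IsPath)
    (C3 : ∀ i, Odd (p i).length)
    (C4 : ∀ i, ∀ j : ℕ, ∀ h : j < (p i).edges.length,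
      ((p i).edges.get ⟨j, h⟩ ∈ M.edgeSet ↔ Even j))
    (C5 : ∀ i, u i ∈ F ∧ v i ∈ F)
    (C6 : ∀ i, ∀ w ∈ (p i).support, w = u i ∨ w = v i ∨ w ∉ F)
    (C7 : ∀ i j, i ≠ j → Disjoint (p i).support.toFinset (p j).support.toFinset)
    (C8 : Finset.univ.biUnion (fun i => ({u i, v i} : Finset V)) = F) :
    ∃ M' : (G.induce ((↑F : Set V)ᶜ)).Subgraph, M'.IsPerfectMatching := by
  classical
  have hnd : ∀ i, (p i).support.Nodup := fun i => (Walk.isPath_def _).mp (C2 i)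
  have hsl : ∀ i, (p i).support.length = (p i).length + 1 := fun i => Walk.length_support _
  have hel : ∀ i, (p i).edges.length = (p i).length := fun i => Walk.length_edges _
  have hne : ∀ i, ¬ Even (p i).length := fun i => Nat.not_even_iff_odd.mpr (C3 i)
  -- the new matching relation
  set Rel : V → V → Prop := fun x y =>
    (M.Adj x y ∧ ∀ i, x ∉ (p i).support) ∨
    (∃ i, ∃ j : ℕ, ∃ hj : j < (p i).edges.length,
      ¬ Even j ∧ (p i).edges.get ⟨j, hj⟩ = s(x, y)) with hRel
  -- M-partners of path vertices stay on the same path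
  have hA : ∀ i x, x ∈ (p i).support → μ x ∈ (p i).support := by
    intro i x hx
    obtain ⟨⟨t, ht⟩, rfl⟩ := List.mem_iff_get.mp hx
    rcases Nat.even_or_odd t with he | ho
    · have htn : t < (p i).length := by
        have h1 : t ≤ (p i).length := by rw [hsl i] at ht; omega
        rcases eq_or_lt_of_le h1 with rfl | h2
        · exact absurd he (hne i)
        · exact h2
      have hj : t < (p i).edges.length := by rw [hel i]; exact htn
      have hedge : (p i).edges.get ⟨t, hj⟩ ∈ M.edgeSet := (C4 i t hj).mpr he
      rw [edges_get_eq (p i) t hj] at hedge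
      have hadj := (Subgraph.mem_edgeSet).mp hedge
      have := (hμ _ _).mp hadj
      rw [← this]
      exact List.get_mem _ _
    · have ht1 : 1 ≤ t := ho.pos
      have hj : t - 1 < (p i).edges.length := by rw [hel i, hsl i] at *; omega
      have hje : Even (t-1) := by
        obtain ⟨c, rfl⟩ := ho; simpa using even_two_mul c
      have hedge : (p i).edges.get ⟨t-1, hj⟩ ∈ M.edgeSet := (C4 i _ hj).mpr hje
      rw [edges_get_eq (p i) _ hj] at hedge
      have hgt : (p i).support.get ⟨t-1+1, by rw [hsl i] at *; omega⟩
          = (p i).support.get ⟨t, ht⟩ := by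
        congr 1
        exact Fin.ext (by simp; omega)
      rw [hgt] at hedge
      have hadj := (Subgraph.mem_edgeSet).mp hedge
      have := (hμ _ _).mp hadj.symm
      rw [← this]
      exact List.get_mem _ _
  -- vertices of F are on paths
  have hFS : ∀ x, x ∈ F → ∃ i, x ∈ (p i).support := by
    intro x hx
    rw [← C8] at hx
    obtain ⟨i, -, hi⟩ := Finset.mem_biUnion.mp hx
    simp only [Finset.mem_insert, Finset.mem_singleton] at hi
    rcases hi with rfl | rfl
    · exact ⟨i, Walk.start_mem_support _⟩
    · exact ⟨i, Walk.end_mem_support _⟩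
  -- non-F vertices on paths are at interior positions
  have hXpos : ∀ i x, x ∈ (p i).support → x ∉ F →
      ∃ t : ℕ, ∃ ht : t < (p i).support.length,
        0 < t ∧ t < (p i).length ∧ (p i).support.get ⟨t, ht⟩ = x := by
    intro i x hx hxF
    obtain ⟨⟨t, ht⟩, rfl⟩ := List.mem_iff_get.mp hx
    refine ⟨t, ht, ?_, ?_, rfl⟩
    · rcases Nat.eq_zero_or_pos t with rfl | h
      · exfalso; apply hxF; rw [support_get_zero (p i) ht]; exact (C5 i).1
      · exact h
    · have h1 : t ≤ (p i).length := by rw [hsl i] at ht; omega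
      rcases eq_or_lt_of_le h1 with rfl | h2
      · exfalso; apply hxF; rw [support_get_last (p i) ht]; exact (C5 i).2
      · exact h2
  -- interior positions avoid F
  have hIntF : ∀ i (t : ℕ) (ht : t < (p i).support.length), 0 < t → t < (p i).length →
      (p i).support.get ⟨t, ht⟩ ∉ F := by
    intro i t ht h0 hn
    rcases C6 i _ (List.get_mem _ _) with h | h | h
    · exfalso
      have h0' : (0:ℕ) < (p i).support.length := by omega
      have h2 : (p i).support.get ⟨t, ht⟩ = (p i).support.get ⟨0, h0'⟩ :=
        h.trans (support_get_zero (p i) h0').symm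
      have := ((hnd i).get_inj_iff).mp h2
      simp only [Fin.mk.injEq] at this
      omega
    · exfalso
      have hn' : (p i).length < (p i).support.length := by rw [hsl i]; omega
      have h2 : (p i).support.get ⟨t, ht⟩ = (p i).support.get ⟨(p i).length, hn'⟩ :=
        h.trans (support_get_last (p i) hn').symm
      have := ((hnd i).get_inj_iff).mp h2
      simp only [Fin.mk.injEq] at this
      omega
    · exact h
  -- Rel implies G-adjacency
  have hRadj : ∀ x y, Rel x y → G.Adj x y := by
    intro x y h
    rcases h with ⟨h, -⟩ | ⟨i, j, hj, -, heq⟩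
    · exact M.adj_sub h
    · have : s(x, y) ∈ (p i).edges := heq ▸ List.get_mem _ _
      exact Walk.edges_subset_edgeSet _ this
  -- Rel is symmetric
  have hRsymm : ∀ x y, Rel x y → Rel y x := by
    intro x y h
    rcases h with ⟨h, hns⟩ | ⟨i, j, hj, hodd, heq⟩
    · refine Or.inl ⟨h.symm, fun i hc => ?_⟩
      have hy : y = μ x := (hμ _ _).mp h
      have : μ y ∈ (p i).support := hA i y hc
      rw [hy, hμinv] at this
      exact hns i this
    · exact Or.inr ⟨i, j, hj, hodd, heq.trans (Sym2.eq_swap)⟩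
  -- existence and uniqueness
  have hexu : ∀ x, x ∉ F → ∃ y, (Rel x y ∧ y ∉ F) ∧ ∀ y', Rel x y' → y' = y := by
    intro x hxF
    by_cases hxs : ∃ i, x ∈ (p i).support
    · obtain ⟨i₀, hx0⟩ := hxs
      obtain ⟨t, ht, ht0, htn, hgx⟩ := hXpos i₀ x hx0 hxF
      rcases Nat.even_or_odd t with he | ho
      · -- even position : partner is at t-1
        have ht2 : 2 ≤ t := by
          rcases Nat.eq_zero_or_pos t with rfl | h
          · omega
          · obtain ⟨c, hc⟩ := he; omega
        have hj : t - 1 < (p i₀).edges.length := by rw [hel i₀]; omega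
        have hjodd : ¬ Even (t-1) := by
          intro hc
          obtain ⟨c, hc'⟩ := hc; obtain ⟨d, hd⟩ := he; omega
        have ht1 : t - 1 < (p i₀).support.length := by omega
        set y := (p i₀).support.get ⟨t-1, ht1⟩ with hy
        have hgeq : (p i₀).edges.get ⟨t-1, hj⟩ = s(x, y) := by
          rw [edges_get_eq (p i₀) _ hj]
          have hgt : (p i₀).support.get ⟨t-1+1, by omega⟩ = x := by
            rw [← hgx]
            congr 1
            exact Fin.ext (by simp; omega)
          rw [hgt]
          have hgt2 : (p i₀).support.get ⟨t-1, by omega⟩ = y := rfl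
          rw [hgt2, Sym2.eq_swap]
        have hyF : y ∉ F := hIntF i₀ (t-1) ht1 (by omega) (by omega)
        refine ⟨y, ⟨Or.inr ⟨i₀, t-1, hj, hjodd, hgeq⟩, hyF⟩, ?_⟩
        intro y' hy'
        rcases hy' with ⟨-, hns⟩ | ⟨i', j', hj', hodd', heq'⟩
        · exact absurd hx0 (hns i₀)
        · have hxi' : x ∈ (p i').support := by
            have : s(x, y') ∈ (p i').edges := heq' ▸ List.get_mem _ _
            exact Walk.fst_mem_support_of_mem_edges _ this
          have hii : i' = i₀ := by
            by_contra hc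
            exact (Finset.disjoint_left.mp (C7 i' i₀ hc)
              (List.mem_toFinset.mpr hxi')) (List.mem_toFinset.mpr hx0)
          subst hii
          rw [edges_get_eq (p i') _ hj'] at heq'
          rcases Sym2.eq_iff.mp heq' with ⟨h1, h2⟩ | ⟨h1, h2⟩
          · -- x at position j' : impossible parity
            exfalso
            rw [← hgx] at h1
            have hjt := ((hnd i').get_inj_iff).mp h1
            simp only [Fin.mk.injEq] at hjt
            exact hodd' (by rw [hjt]; exact he)
          · -- x at position j'+1 : j' = t-1
            rw [← hgx] at h2
            have hjt := ((hnd i').get_inj_iff).mp h2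
            simp only [Fin.mk.injEq] at hjt
            rw [← h1, hy]
            congr 1
            exact Fin.ext (by simp; omega)
      · -- odd position : partner is at t+1
        have hj : t < (p i₀).edges.length := by rw [hel i₀]; omega
        have ht1 : t + 1 < (p i₀).support.length := by rw [hsl i₀]; omega
        set y := (p i₀).support.get ⟨t+1, ht1⟩ with hy
        have hgeq : (p i₀).edges.get ⟨t, hj⟩ = s(x, y) := by
          rw [edges_get_eq (p i₀) _ hj]
          have hgt : (p i₀).support.get ⟨t, by omega⟩ = x := hgx
          rw [hgt]
        have htodd : ¬ Even t := Nat.not_even_iff_odd.mpr ho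
        have hyF : y ∉ F := by
          refine hIntF i₀ (t+1) ht1 (by omega) ?_
          have h1 : t + 1 ≤ (p i₀).length := htn
          rcases eq_or_lt_of_le h1 with he' | h2
          · exfalso
            apply hne i₀
            rw [← he']
            simpa [Nat.even_add_one] using htodd
          · exact h2
        refine ⟨y, ⟨Or.inr ⟨i₀, t, hj, htodd, hgeq⟩, hyF⟩, ?_⟩
        intro y' hy'
        rcases hy' with ⟨-, hns⟩ | ⟨i', j', hj', hodd', heq'⟩
        · exact absurd hx0 (hns i₀)
        · have hxi' : x ∈ (p i').support := by
            have : s(x, y') ∈ (p i').edges := heq' ▸ List.get_mem _ _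
            exact Walk.fst_mem_support_of_mem_edges _ this
          have hii : i' = i₀ := by
            by_contra hc
            exact (Finset.disjoint_left.mp (C7 i' i₀ hc)
              (List.mem_toFinset.mpr hxi')) (List.mem_toFinset.mpr hx0)
          subst hii
          rw [edges_get_eq (p i') _ hj'] at heq'
          rcases Sym2.eq_iff.mp heq' with ⟨h1, h2⟩ | ⟨h1, h2⟩
          · -- x at position j' : j' = t
            rw [← hgx] at h1
            have hjt := ((hnd i').get_inj_iff).mp h1
            simp only [Fin.mk.injEq] at hjt
            rw [← h2, hy]
            congr 1
            exact Fin.ext (by simp; omega)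
          · -- x at position j'+1 : parity contradiction
            exfalso
            rw [← hgx] at h2
            have hjt := ((hnd i').get_inj_iff).mp h2
            simp only [Fin.mk.injEq] at hjt
            apply hodd'
            rcases ho with ⟨c, hc⟩
            exact ⟨c, by omega⟩
    · -- off all paths : partner is μ x
      push_neg at hxs
      have hmuS : ∀ i, μ x ∉ (p i).support := by
        intro i hc
        have : μ (μ x) ∈ (p i).support := hA i _ hc
        rw [hμinv] at this
        exact hxs i this
      have hmuF : μ x ∉ F := by
        intro hc
        obtain ⟨i, hi⟩ := hFS _ hc
        exact hmuS i hi
      refine ⟨μ x, ⟨Or.inl ⟨(hμ _ _).mpr rfl, hxs⟩, hmuF⟩, ?_⟩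
      intro y' hy'
      rcases hy' with ⟨h, -⟩ | ⟨i, j, hj, hodd, heq⟩
      · exact (hμ _ _).mp h
      · exfalso
        have : s(x, y') ∈ (p i).edges := heq ▸ List.get_mem _ _
        exact hxs i (Walk.fst_mem_support_of_mem_edges _ this)
  -- build the perfect matching of the induced graph
  refine ⟨⟨Set.univ, fun x y => Rel ↑x ↑y, ?_, fun _ => Set.mem_univ _, ?_⟩, ?_, fun _ => Set.mem_univ _⟩
  · intro x y h
    exact hRadj _ _ h
  · constructor
    intro x y h
    exact hRsymm _ _ h
  · rintro ⟨x, hx⟩ -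
    have hxF : x ∉ F := by simpa using hx
    obtain ⟨y, ⟨hry, hyF⟩, huniq⟩ := hexu x hxF
    refine ⟨⟨y, by simpa using hyF⟩, hry, ?_⟩
    rintro ⟨z, hz⟩ hrz
    exact Subtype.ext (huniq z hrz)

end AltPathAux

/-- Alternating path characterization of the dual matching delta-matroid:
for a graph `G` with a perfect matching `M`, a set `F` satisfies that `G − F`
has a perfect matching iff there is a collection of `|F|/2` pairwise
vertex-disjoint `M`-alternating paths (paths alternating between `M`-edges and
non-`M`-edges, beginning and ending with an `M`-edge) whose endpoints are
exactly the vertices of `F` and whose internal vertices avoid `F`. -/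
theorem dual_matching_feasible_iff_alternating_paths
    {V : Type*} [Fintype V] [DecidableEq V] (G : SimpleGraph V)
    (M : G.Subgraph) (hM : M.IsPerfectMatching) (F : Finset V) :
    (∃ M' : (G.induce ((↑F : Set V)ᶜ)).Subgraph, M'.IsPerfectMatching) ↔
      ∃ (k : ℕ) (u v : Fin k → V) (p : ∀ i, G.Walk (u i) (v i)),
        F.card = 2 * k ∧
        (∀ i, (p i).IsPath) ∧
        -- alternation, starting and ending with matching edges:
        (∀ i, Odd (p i).length) ∧
        (∀ i, ∀ j : ℕ, ∀ h : j < (p i).edges.length,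
          ((p i).edges.get ⟨j, h⟩ ∈ M.edgeSet ↔ Even j)) ∧
        -- endpoints in `F`, internal vertices outside `F`:
        (∀ i, u i ∈ F ∧ v i ∈ F) ∧
        (∀ i, ∀ w ∈ (p i).support, w = u i ∨ w = v i ∨ w ∉ F) ∧
        -- pairwise vertex-disjoint:
        (∀ i j, i ≠ j → Disjoint (p i).support.toFinset (p j).support.toFinset) ∧
        -- endpoints are exactly the vertices of `F`:
        Finset.univ.biUnion (fun i => ({u i, v i} : Finset V)) = F := by
  classical
  have hMall := SimpleGraph.Subgraph.isPerfectMatching_iff.mp hM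
  choose μ hμ1 hμ2 using hMall
  have hμ : ∀ v w, M.Adj v w ↔ w = μ v := fun v w => ⟨fun h => hμ2 v w h, fun h => h ▸ hμ1 v⟩
  have hμadj : ∀ v, G.Adj v (μ v) := fun v => M.adj_sub (hμ1 v)
  have hμinv : ∀ v, μ (μ v) = v := fun v => (hμ2 (μ v) v ((hμ1 v).symm)).symm
  constructor
  · rintro ⟨M', hM'⟩
    have hM'all := SimpleGraph.Subgraph.isPerfectMatching_iff.mp hM'
    choose m₀ hm₀1 hm₀2 using hM'all
    set m : V → V := fun x => if h : x ∈ ((↑F : Set V)ᶜ) then (m₀ ⟨x, h⟩ : V) else x with hmdef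
    have hm : ∀ x, x ∉ F → m x ∉ F ∧ G.Adj x (m x) ∧ m (m x) = x := by
      intro x hxF
      have hx : x ∈ ((↑F : Set V)ᶜ) := by simpa using hxF
      have hmx : m x = ↑(m₀ ⟨x, hx⟩) := by rw [hmdef]; simp [hx]
      have hmem : (↑(m₀ ⟨x, hx⟩) : V) ∈ ((↑F : Set V)ᶜ) := (m₀ ⟨x, hx⟩).2
      refine ⟨?_, ?_, ?_⟩
      · rw [hmx]; exact fun hc => hmem (Finset.mem_coe.mpr hc)
      · rw [hmx]; exact M'.adj_sub (hm₀1 ⟨x, hx⟩)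
      · rw [hmx]
        have hmx2 : m ↑(m₀ ⟨x, hx⟩) = ↑(m₀ ⟨↑(m₀ ⟨x, hx⟩), hmem⟩) := by
          rw [hmdef]; simp [hmem]
        rw [hmx2]
        have he : (⟨↑(m₀ ⟨x, hx⟩), hmem⟩ : ((↑F : Set V)ᶜ : Set V)) = m₀ ⟨x, hx⟩ :=
          Subtype.ext rfl
        rw [he]
        have : (⟨x, hx⟩ : ((↑F : Set V)ᶜ : Set V)) = m₀ (m₀ ⟨x, hx⟩) :=
          hm₀2 (m₀ ⟨x, hx⟩) ⟨x, hx⟩ ((hm₀1 ⟨x, hx⟩).symm)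
        rw [← this]
    obtain ⟨k, u, v, p, C1, C2, C3, C4, C5, C6, C7, C8, -, -⟩ :=
      AltPathAux.aux G M μ hμ hμadj hμinv F.card F rfl m hm
    exact ⟨k, u, v, p, C1, C2, C3, C4, C5, C6, C7, C8⟩
  · rintro ⟨k, u, v, p, -, C2, C3, C4, C5, C6, C7, C8⟩
    exact AltPathAux.backward G M μ hμ hμinv F k u v p C2 C3 C4 C5 C6 C7 C8
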